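/- Let k ≥ 4 be an integer, K0 > 0, K1 = (2k+1)!!·K0, γ = k/3 − 1/2, p ∈ (2,3), B* > 0, C_g > 0, D > 0, Γ ∈ ℝ and C_W > 0. Let g : (0,∞) → ℝ satisfy |g(y)| ≤ C_g·y^{−5}·(1+y^{4k−2}) for all y > 0, and let W : (0,∞) → (0,∞) solve the Alencar equation with |W(z) − z − z^{−2} − Γ·z^{−3}| ≤ C_W·z^{−5} for all z ≥ 1. For δ ∈ (0, K1/2) set K2^±(δ) = (K1 ± 2δ)^{1/3}, w_δ^+(z,τ) = W_{K2^+(δ)}(z), w_δ^−(z,τ) = W_{K2^−(δ)}(z) + D·e^{2γτ}, and w_md^±(z,τ) = e^{−γτ}·(y + (K1 ± δ)·e^{3γτ}·φ_k(y) ± (B*·K1²·e^{6γτ}·g(y) + e^{(p+1)γτ}·y^{−p})) evaluated at y = e^{γτ}·z. Then there exists δ̄ ∈ (0, K1/2) such that for every δ ∈ (0, δ̄), setting Z_δ = (4/3)·δ^{−1/(p−2)}, there exists τ_δ ∈ ℝ with: for all τ ≤ τ_δ, w_md^+(Z_δ/2, τ) > w_δ^+(Z_δ/2, τ), w_md^−(Z_δ/2,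 τ) < w_δ^−(Z_δ/2, τ), w_md^+(Z_δ, τ) < w_δ^+(Z_δ, τ), and w_md^−(Z_δ, τ) > w_δ^−(Z_δ, τ). -/

import Mathlib

open Filter Set

noncomputable def phik (k : ℕ) (y : ℝ) : ℝ :=
  y ^ (-2 : ℤ) * ∑ n ∈ Finset.range (k + 1),
    ((k.choose n : ℝ) / (Nat.doubleFactorial (2 * n + 1) : ℝ)) * y ^ (2 * n)

noncomputable def WK (W : ℝ → ℝ) (K z : ℝ) : ℝ := K * W (z / K)

noncomputable def wmd (k : ℕ) (K1 γ Bstar p : ℝ) (g : ℝ → ℝ) (δ ε z τ : ℝ) : ℝ :=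
  Real.exp (-(γ * τ)) *
    (Real.exp (γ * τ) * z
      + (K1 + ε * δ) * Real.exp (3 * γ * τ) * phik k (Real.exp (γ * τ) * z)
      + ε * (Bstar * K1 ^ 2 * Real.exp (6 * γ * τ) * g (Real.exp (γ * τ) * z)
          + Real.exp ((p + 1) * γ * τ) * (Real.exp (γ * τ) * z) ^ (-p)))

lemma wmd_eq (k : ℕ) (K1 γ Bstar p : ℝ) (g : ℝ → ℝ) (δ ε z τ : ℝ) (hz : 0 < z) :
    wmd k K1 γ Bstar p g δ ε z τ
      = z + (K1 + ε*δ) * (z^(-2:ℤ) *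
          (∑ n ∈ Finset.range (k+1), ((k.choose n:ℝ)/(Nat.doubleFactorial (2*n+1):ℝ))
            * ((Real.exp (γ*τ))^(2*n) * z^(2*n))))
        + ε * (Bstar * K1^2) * (Real.exp (5*(γ*τ)) * g (Real.exp (γ*τ)*z))
        + ε * z^(-p) := by
  unfold wmd phik
  have hE : (0:ℝ) < Real.exp (γ*τ) := Real.exp_pos _
  have hmul : ∀ n : ℕ, (Real.exp (γ*τ) * z) ^ (2*n)
      = (Real.exp (γ*τ))^(2*n) * z^(2*n) := fun n => mul_pow ..
  simp only [hmul]
  have hrp : (Real.exp (γ*τ) * z) ^ (-p) = Real.exp (γ*τ*(-p)) * z^(-p) := by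
    rw [Real.mul_rpow hE.le hz.le, ← Real.exp_mul]
  have hzp : (Real.exp (γ*τ) * z) ^ (-2:ℤ) = Real.exp (-(2*(γ*τ))) * z^(-2:ℤ) := by
    rw [mul_zpow]
    congr 1
    rw [show ((-2:ℤ)) = (-(2:ℕ) : ℤ) by norm_num, zpow_neg, zpow_natCast,
      ← Real.exp_nat_mul, ← Real.exp_neg]
    norm_num
  rw [hrp, hzp]
  have e3 : Real.exp (3*γ*τ) = Real.exp (3*(γ*τ)) := by ring_nf
  have e6 : Real.exp (6*γ*τ) = Real.exp (6*(γ*τ)) := by ring_nf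
  have ep : Real.exp ((p+1)*γ*τ) = Real.exp ((p+1)*(γ*τ)) := by ring_nf
  rw [e3, e6, ep]
  set E := γ*τ
  have key : ∀ a b : ℝ, Real.exp a * Real.exp b = Real.exp (a+b) := fun a b => (Real.exp_add a b).symm
  have h1 : Real.exp (-E) * Real.exp E = 1 := by rw [← Real.exp_add]; simp
  have h2 : Real.exp (-E) * (Real.exp (3*E) * Real.exp (-(2*E))) = 1 := by
    rw [← Real.exp_add, ← Real.exp_add, show -E + (3*E + -(2*E)) = 0 by ring, Real.exp_zero]
  have h3 : Real.exp (-E) * Real.exp (6*E) = Real.exp (5*E) := by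
    rw [← Real.exp_add, show -E + 6*E = 5*E by ring]
  have h4 : Real.exp (-E) * (Real.exp ((p+1)*E) * Real.exp (E*(-p))) = 1 := by
    rw [← Real.exp_add, ← Real.exp_add, show -E + ((p+1)*E + E*(-p)) = 0 by ring, Real.exp_zero]
  linear_combination z*h1 + ((K1+ε*δ)*(z^(-2:ℤ) *
          (∑ n ∈ Finset.range (k+1), ((k.choose n:ℝ)/(Nat.doubleFactorial (2*n+1):ℝ))
            * ((Real.exp E)^(2*n) * z^(2*n)))))*h2
    + (ε*(Bstar*K1^2)*g (Real.exp E * z))*h3 + (ε*z^(-p))*h4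

lemma exp_tendsto_zero {γ : ℝ} (hγ : 0 < γ) :
    Tendsto (fun τ => Real.exp (γ * τ)) atBot (nhds 0) :=
  Real.tendsto_exp_atBot.comp (tendsto_id.const_mul_atBot hγ)

lemma sum_tendsto (k : ℕ) (z γ : ℝ) (hγ : 0 < γ) :
    Tendsto (fun τ => ∑ n ∈ Finset.range (k+1),
      ((k.choose n : ℝ) / (Nat.doubleFactorial (2*n+1) : ℝ)) * ((Real.exp (γ*τ))^(2*n) * z^(2*n)))
      atBot (nhds 1) := by
  have hE := exp_tendsto_zero hγ
  have h : Tendsto (fun τ => ∑ n ∈ Finset.range (k+1),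
      ((k.choose n : ℝ) / (Nat.doubleFactorial (2*n+1) : ℝ)) * ((Real.exp (γ*τ))^(2*n) * z^(2*n)))
      atBot (nhds (∑ n ∈ Finset.range (k+1),
        if n = 0 then (1:ℝ) else 0)) := by
    apply tendsto_finset_sum
    intro n _
    rcases Nat.eq_zero_or_pos n with h0 | h0
    · subst h0
      simp only [Nat.choose_zero_right, mul_zero, pow_zero, if_pos]
      simpa [Nat.doubleFactorial] using tendsto_const_nhds (α := ℝ) (f := atBot) (a := (1:ℝ))
    · have hpow : Tendsto (fun τ => (Real.exp (γ*τ))^(2*n)) atBot (nhds 0) := by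
        have := hE.pow (2*n)
        simpa [zero_pow (by omega : 2*n ≠ 0)] using this
      have : Tendsto (fun τ =>
          ((k.choose n : ℝ) / (Nat.doubleFactorial (2*n+1) : ℝ)) * ((Real.exp (γ*τ))^(2*n) * z^(2*n)))
          atBot (nhds (((k.choose n : ℝ) / (Nat.doubleFactorial (2*n+1) : ℝ)) * (0 * z^(2*n)))) :=
        ((hpow.mul_const _).const_mul _)
      simpa [if_neg (by omega : n ≠ 0)] using this
  simpa using h

lemma wmd_ev (k : ℕ) (K1 γ Bstar p Cg : ℝ) (g : ℝ → ℝ) (δ ε z : ℝ)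
    (hγ : 0 < γ) (hz : 0 < z) (hε : |ε| = 1) (hB : 0 ≤ Bstar) (hCg : 0 ≤ Cg)
    (hgbd : ∀ y > (0:ℝ), |g y| ≤ Cg * y ^ (-5 : ℤ) * (1 + y ^ (4 * k - 2)))
    (η : ℝ) (hη : 0 < η) :
    ∀ᶠ τ in atBot, |wmd k K1 γ Bstar p g δ ε z τ
        - (z + (K1 + ε*δ) * z^(-2:ℤ) + ε * z^(-p))|
      ≤ η + 2*(Bstar*K1^2*Cg)*z^(-5:ℤ) := by
  have hE0 := exp_tendsto_zero hγ
  set A := |K1 + ε*δ| * z^(-2:ℤ) + 1 with hA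
  have hz2 : (0:ℝ) < z^(-2:ℤ) := by positivity
  have hApos : 0 < A := by positivity
  have hS : ∀ᶠ τ in atBot, |(∑ n ∈ Finset.range (k+1),
      ((k.choose n : ℝ) / (Nat.doubleFactorial (2*n+1) : ℝ)) * ((Real.exp (γ*τ))^(2*n) * z^(2*n))) - 1|
      ≤ η / A := by
    have := Metric.tendsto_nhds.mp (sum_tendsto k z γ hγ) (η / A) (by positivity)
    filter_upwards [this] with τ hτ
    rw [Real.dist_eq] at hτ; exact hτ.le
  have hEz : ∀ᶠ τ in atBot, Real.exp (γ*τ) * z ≤ 1 := by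
    have h1 : ∀ᶠ τ in atBot, Real.exp (γ*τ) < 1/z :=
      hE0.eventually_lt_const (by positivity)
    filter_upwards [h1] with τ hτ
    calc Real.exp (γ*τ) * z ≤ (1/z) * z := by nlinarith [Real.exp_pos (γ*τ)]
      _ = 1 := by field_simp
  filter_upwards [hS, hEz] with τ hSτ hEzτ
  rw [wmd_eq k K1 γ Bstar p g δ ε z τ hz]
  have hEp : (0:ℝ) < Real.exp (γ*τ) := Real.exp_pos _
  have hy : 0 < Real.exp (γ*τ) * z := by positivity
  -- the g-term bound
  have hg1 : Real.exp (5*(γ*τ)) * |g (Real.exp (γ*τ)*z)| ≤ 2*Cg*z^(-5:ℤ) := by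
    have hb := hgbd _ hy
    have hpow1 : (Real.exp (γ*τ) * z) ^ (4*k-2) ≤ 1 :=
      pow_le_one₀ hy.le hEzτ
    have hkey : Real.exp (5*(γ*τ)) * (Real.exp (γ*τ) * z) ^ (-5:ℤ) = z^(-5:ℤ) := by
      rw [mul_zpow, show ((-5:ℤ)) = (-(5:ℕ) : ℤ) by norm_num, zpow_neg, zpow_natCast,
        ← Real.exp_nat_mul]
      field_simp
      congr 1; push_cast; ring
    calc Real.exp (5*(γ*τ)) * |g (Real.exp (γ*τ)*z)|
        ≤ Real.exp (5*(γ*τ)) * (Cg * (Real.exp (γ*τ)*z) ^ (-5:ℤ) * (1 + (Real.exp (γ*τ)*z) ^ (4*k-2))) := by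
          apply mul_le_mul_of_nonneg_left hb (Real.exp_pos _).le
      _ ≤ Real.exp (5*(γ*τ)) * (Cg * (Real.exp (γ*τ)*z) ^ (-5:ℤ) * 2) := by
          have h5 : (0:ℝ) < (Real.exp (γ*τ)*z) ^ (-5:ℤ) := by positivity
          apply mul_le_mul_of_nonneg_left _ (Real.exp_pos _).le
          have h6 : (0:ℝ) ≤ Cg * (Real.exp (γ*τ)*z) ^ (-5:ℤ) := by positivity
          nlinarith [mul_le_mul_of_nonneg_left hpow1 h6]
      _ = 2*Cg*(Real.exp (5*(γ*τ)) * (Real.exp (γ*τ) * z) ^ (-5:ℤ)) := by ring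
      _ = 2*Cg*z^(-5:ℤ) := by rw [hkey]
  have habs : ∀ x y : ℝ, |x + y| ≤ |x| + |y| := fun x y => abs_add_le x y
  have expand : z + (K1 + ε*δ) * (z^(-2:ℤ) *
          (∑ n ∈ Finset.range (k+1), ((k.choose n:ℝ)/(Nat.doubleFactorial (2*n+1):ℝ))
            * ((Real.exp (γ*τ))^(2*n) * z^(2*n))))
        + ε * (Bstar * K1^2) * (Real.exp (5*(γ*τ)) * g (Real.exp (γ*τ)*z))
        + ε * z^(-p) - (z + (K1 + ε*δ) * z^(-2:ℤ) + ε * z^(-p))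
      = (K1 + ε*δ) * z^(-2:ℤ) * ((∑ n ∈ Finset.range (k+1),
          ((k.choose n:ℝ)/(Nat.doubleFactorial (2*n+1):ℝ)) * ((Real.exp (γ*τ))^(2*n) * z^(2*n))) - 1)
        + ε * (Bstar * K1^2) * (Real.exp (5*(γ*τ)) * g (Real.exp (γ*τ)*z)) := by ring
  rw [expand]
  have t1 : |(K1 + ε*δ) * z^(-2:ℤ) * ((∑ n ∈ Finset.range (k+1),
          ((k.choose n:ℝ)/(Nat.doubleFactorial (2*n+1):ℝ)) * ((Real.exp (γ*τ))^(2*n) * z^(2*n))) - 1)| ≤ η := by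
    rw [abs_mul, abs_mul, abs_of_pos hz2]
    have hle : |K1 + ε*δ| * z^(-2:ℤ) ≤ A := by rw [hA]; linarith
    calc |K1 + ε*δ| * z^(-2:ℤ) * _ ≤ A * (η / A) := by
          apply mul_le_mul hle hSτ (abs_nonneg _) hApos.le
      _ = η := by field_simp
  have t2 : |ε * (Bstar * K1^2) * (Real.exp (5*(γ*τ)) * g (Real.exp (γ*τ)*z))|
      ≤ 2*(Bstar*K1^2*Cg)*z^(-5:ℤ) := by
    have : |ε * (Bstar * K1^2) * (Real.exp (5*(γ*τ)) * g (Real.exp (γ*τ)*z))|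
        = Bstar * K1^2 * (Real.exp (5*(γ*τ)) * |g (Real.exp (γ*τ)*z)|) := by
      simp [abs_mul, hε, Real.abs_exp, abs_of_nonneg hB, abs_pow, sq_abs, mul_assoc]
    rw [this]
    calc Bstar * K1^2 * (Real.exp (5*(γ*τ)) * |g (Real.exp (γ*τ)*z)|)
        ≤ Bstar * K1^2 * (2*Cg*z^(-5:ℤ)) := by
          apply mul_le_mul_of_nonneg_left hg1 (by positivity)
      _ = 2*(Bstar*K1^2*Cg)*z^(-5:ℤ) := by ring
  calc |_ + _| ≤ _ + _ := abs_add_le _ _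
    _ ≤ η + 2*(Bstar*K1^2*Cg)*z^(-5:ℤ) := add_le_add t1 t2

lemma WK_bd (W : ℝ → ℝ) (Γ CW : ℝ)
    (hWasym : ∀ x ≥ (1:ℝ), |W x - x - x ^ (-2:ℤ) - Γ * x ^ (-3:ℤ)| ≤ CW * x ^ (-5:ℤ))
    (K z : ℝ) (hK : 0 < K) (hKz : K ≤ z) :
    |WK W K z - z - K^3 * z^(-2:ℤ) - Γ*K^4*z^(-3:ℤ)| ≤ CW * K^6 * z^(-5:ℤ) := by
  have hz : 0 < z := lt_of_lt_of_le hK hKz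
  have hx : (1:ℝ) ≤ z/K := (one_le_div hK).mpr hKz
  have h := hWasym _ hx
  have h2 : |K * (W (z/K) - z/K - (z/K)^(-2:ℤ) - Γ*(z/K)^(-3:ℤ))|
      ≤ K * (CW * (z/K)^(-5:ℤ)) := by
    rw [abs_mul, abs_of_pos hK]
    exact mul_le_mul_of_nonneg_left h hK.le
  have zn : ∀ (x : ℝ) (n : ℕ), x ^ (-(n:ℤ)) = (x^n)⁻¹ := fun x n => by
    rw [zpow_neg, zpow_natCast]
  have e1 : K * (W (z/K) - z/K - (z/K)^(-2:ℤ) - Γ*(z/K)^(-3:ℤ))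
      = WK W K z - z - K^3 * z^(-2:ℤ) - Γ*K^4*z^(-3:ℤ) := by
    unfold WK
    rw [show ((-2:ℤ)) = -((2:ℕ):ℤ) by norm_num, show ((-3:ℤ)) = -((3:ℕ):ℤ) by norm_num,
      zn, zn, zn, zn]
    field_simp
  have e2 : K * (CW * (z/K)^(-5:ℤ)) = CW * K^6 * z^(-5:ℤ) := by
    rw [show ((-5:ℤ)) = -((5:ℕ):ℤ) by norm_num, zn, zn]
    field_simp
  rw [e1, e2] at h2
  exact h2
lemma margin_eq (p δ a : ℝ) (hp2 : 2 < p) (hδ : 0 < δ) (ha : 0 < a) :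
    δ * (a * δ ^ (-(1/(p-2)))) ^ ((-2):ℝ) = a^(p-2) * (a * δ ^ (-(1/(p-2)))) ^ (-p) := by
  have h2 : p - 2 ≠ 0 := by linarith
  have hd : (0:ℝ) < δ ^ (-(1/(p-2))) := Real.rpow_pos_of_pos hδ _
  rw [Real.mul_rpow ha.le hd.le, Real.mul_rpow ha.le hd.le,
    ← Real.rpow_mul hδ.le, ← Real.rpow_mul hδ.le]
  have hA : a^(p-2) * a^(-p) = a^((-2):ℝ) := by
    rw [← Real.rpow_add ha, show p - 2 + -p = (-2:ℝ) by ring]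
  have hB : δ * δ^((-(1/(p-2)))*(-2)) = δ^((-(1/(p-2)))*(-p)) := by
    nth_rewrite 1 [← Real.rpow_one δ]
    rw [← Real.rpow_add hδ]
    congr 1
    field_simp
    ring
  rw [← mul_assoc (a^(p-2)), hA, ← hB]
  ring

lemma rz_neg (x : ℝ) (n : ℕ) : x ^ (-(n:ℤ)) = x ^ (-(n:ℝ)) := by
  rw [← Real.rpow_intCast x (-(n:ℤ))]
  norm_num

lemma rz2 (x : ℝ) : x ^ (-2:ℤ) = x ^ ((-2):ℝ) := by
  rw [← Real.rpow_intCast x (-2)]; norm_num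

lemma rz3 (x : ℝ) : x ^ (-3:ℤ) = x ^ ((-3):ℝ) := by
  rw [← Real.rpow_intCast x (-3)]; norm_num

lemma rz5 (x : ℝ) : x ^ (-5:ℤ) = x ^ ((-5):ℝ) := by
  rw [← Real.rpow_intCast x (-5)]; norm_num


set_option maxHeartbeats 2000000 in
/-- Matching of the intermediate and inner barriers: they cross in the interval
`(Z_δ/2, Z_δ)` where `Z_δ = (4/3) δ^{-1/(p-2)}`. -/
theorem stmt_12
    (k : ℕ) (hk : 4 ≤ k) (K0 : ℝ) (hK0 : 0 < K0)
    (K1 : ℝ) (hK1 : K1 = (Nat.doubleFactorial (2 * k + 1) : ℝ) * K0)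
    (γ : ℝ) (hγ : γ = (k : ℝ) / 3 - 1 / 2)
    (p : ℝ) (hp : p ∈ Set.Ioo (2:ℝ) 3)
    (Bstar : ℝ) (hBstar : 0 < Bstar)
    (Cg : ℝ) (hCg : 0 < Cg)
    (D : ℝ) (hD : 0 < D)
    (Γ : ℝ) (CW : ℝ) (hCW : 0 < CW)
    (g : ℝ → ℝ)
    (hgbd : ∀ y > (0:ℝ), |g y| ≤ Cg * y ^ (-5 : ℤ) * (1 + y ^ (4 * k - 2)))
    (W : ℝ → ℝ)
    (hWpos : ∀ z > (0:ℝ), 0 < W z)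
    (hAlencar : ∀ z > (0:ℝ),
      deriv (deriv W) z / (1 + (deriv W z) ^ 2) + (3 / z) * deriv W z - 3 / W z = 0)
    (hWasym : ∀ z ≥ (1:ℝ),
      |W z - z - z ^ (-2 : ℤ) - Γ * z ^ (-3 : ℤ)| ≤ CW * z ^ (-5 : ℤ)) :
    ∃ δbar ∈ Set.Ioo (0:ℝ) (K1 / 2), ∀ δ ∈ Set.Ioo (0:ℝ) δbar,
      ∀ Zδ : ℝ, Zδ = (4 / 3) * δ ^ (-(1 / (p - 2))) →
        ∃ τδ : ℝ, ∀ τ ≤ τδ,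
          wmd k K1 γ Bstar p g δ 1 (Zδ / 2) τ
              > WK W ((K1 + 2 * δ) ^ ((1:ℝ) / 3)) (Zδ / 2) ∧
          wmd k K1 γ Bstar p g δ (-1) (Zδ / 2) τ
              < WK W ((K1 - 2 * δ) ^ ((1:ℝ) / 3)) (Zδ / 2) + D * Real.exp (2 * γ * τ) ∧
          wmd k K1 γ Bstar p g δ 1 Zδ τ
              < WK W ((K1 + 2 * δ) ^ ((1:ℝ) / 3)) Zδ ∧
          wmd k K1 γ Bstar p g δ (-1) Zδ τ
              > WK W ((K1 - 2 * δ) ^ ((1:ℝ) / 3)) Zδ + D * Real.exp (2 * γ * τ) := by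
  obtain ⟨hp2, hp3⟩ := hp
  have hk4 : (4:ℝ) ≤ (k:ℝ) := by exact_mod_cast hk
  have hγpos : 0 < γ := by rw [hγ]; linarith
  have hK1pos : 0 < K1 := by
    have h1 : (0:ℝ) < (Nat.doubleFactorial (2*k+1) : ℝ) := by
      exact_mod_cast Nat.doubleFactorial_pos (2*k+1)
    rw [hK1]; exact mul_pos h1 hK0
  -- crossing constants
  set c₁ : ℝ := 1 - ((2:ℝ)/3)^(p-2) with hc₁def
  set c₂ : ℝ := ((4:ℝ)/3)^(p-2) - 1 with hc₂def
  have hc₁pos : 0 < c₁ := by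
    have : ((2:ℝ)/3)^(p-2) < 1 :=
      Real.rpow_lt_one (by norm_num) (by norm_num) (by linarith)
    simp only [hc₁def]; linarith
  have hc₂pos : 0 < c₂ := by
    have : (1:ℝ) < ((4:ℝ)/3)^(p-2) := by
      rw [Real.one_lt_rpow_iff_of_pos (by norm_num)]
      left; constructor <;> [norm_num; linarith]
    simp only [hc₂def]; linarith
  set c : ℝ := min c₁ c₂ with hcdef
  have hcpos : 0 < c := lt_min hc₁pos hc₂pos
  set C₃ : ℝ := |Γ| * (2*K1)^((4:ℝ)/3) with hC₃def
  set C₄ : ℝ := CW * (2*K1)^2 + 2*(Bstar*K1^2*Cg) with hC₄def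
  have hC₃0 : 0 ≤ C₃ := by positivity
  have hC₄0 : 0 ≤ C₄ := by positivity
  -- the threshold Z₀
  obtain ⟨Z₀, hZ₀⟩ : ∃ Z₀:ℝ, ∀ z ≥ Z₀, C₃*z^(p-3) + C₄*z^(p-5) < c := by
    have h3 : Tendsto (fun z:ℝ => z^(p-3)) atTop (nhds 0) := by
      have := tendsto_rpow_neg_atTop (y := 3-p) (by linarith)
      simpa [show -(3-p) = p-3 by ring] using this
    have h5 : Tendsto (fun z:ℝ => z^(p-5)) atTop (nhds 0) := by
      have := tendsto_rpow_neg_atTop (y := 5-p) (by linarith)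
      simpa [show -(5-p) = p-5 by ring] using this
    have hsum : Tendsto (fun z:ℝ => C₃*z^(p-3) + C₄*z^(p-5)) atTop (nhds 0) := by
      have := (h3.const_mul C₃).add (h5.const_mul C₄)
      simpa using this
    exact eventually_atTop.mp (hsum.eventually_lt_const hcpos)
  set M : ℝ := max (max Z₀ 1) ((2*K1)^((1:ℝ)/3)) with hMdef
  have hM1 : (1:ℝ) ≤ M := le_max_of_le_left (le_max_right _ _)
  have hMpos : 0 < M := lt_of_lt_of_le one_pos hM1
  have hMZ₀ : Z₀ ≤ M := le_max_of_le_left (le_max_left _ _)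
  have hMK : (2*K1)^((1:ℝ)/3) ≤ M := le_max_right _ _
  set δbar : ℝ := min (K1/4) ((3/2*M)^(-(p-2))) with hδbardef
  have hδbarpos : 0 < δbar := by
    apply lt_min (by linarith)
    exact Real.rpow_pos_of_pos (by linarith) _
  refine ⟨δbar, ⟨hδbarpos, lt_of_le_of_lt (min_le_left _ _) (by linarith)⟩, ?_⟩
  rintro δ ⟨hδ0, hδbar⟩ Zδ hZδ
  have hδK : δ < K1/4 := lt_of_lt_of_le hδbar (min_le_left _ _)
  -- the inner points
  have hdpow : (0:ℝ) < δ ^ (-(1/(p-2))) := Real.rpow_pos_of_pos hδ0 _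
  have hz₁eq : Zδ/2 = 2/3 * δ ^ (-(1/(p-2))) := by rw [hZδ]; ring
  have hZeq : Zδ = 4/3 * δ ^ (-(1/(p-2))) := by rw [hZδ]
  -- Zδ/2 ≥ M
  have hz₁M : M ≤ Zδ/2 := by
    have hδle : δ ≤ (3/2*M)^(-(p-2)) := le_of_lt (lt_of_lt_of_le hδbar (min_le_right _ _))
    have h32M : (0:ℝ) < 3/2*M := by linarith
    have hmono : ((3/2*M)^(-(p-2))) ^ (-(1/(p-2))) ≤ δ ^ (-(1/(p-2))) := by
      apply Real.rpow_le_rpow_of_nonpos hδ0 hδle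
      have : 0 < 1/(p-2) := div_pos one_pos (by linarith)
      linarith
    have heval : ((3/2*M)^(-(p-2))) ^ (-(1/(p-2))) = 3/2*M := by
      rw [← Real.rpow_mul h32M.le]
      rw [show (-(p-2)) * (-(1/(p-2))) = (p-2) * (1/(p-2)) by ring]
      rw [mul_one_div, div_self (by linarith : p-2 ≠ 0), Real.rpow_one]
    rw [heval] at hmono
    rw [hz₁eq]; linarith
  have hz₁pos : 0 < Zδ/2 := lt_of_lt_of_le hMpos hz₁M
  have hZM : M ≤ Zδ := by linarith
  have hZpos : 0 < Zδ := by linarith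
  -- rescaling constants
  have hKp0 : (0:ℝ) < K1 + 2*δ := by linarith
  have hKm0 : (0:ℝ) < K1 - 2*δ := by linarith
  set Kp : ℝ := (K1 + 2*δ) ^ ((1:ℝ)/3) with hKpdef
  set Km : ℝ := (K1 - 2*δ) ^ ((1:ℝ)/3) with hKmdef
  have hKppos : 0 < Kp := Real.rpow_pos_of_pos hKp0 _
  have hKmpos : 0 < Km := Real.rpow_pos_of_pos hKm0 _
  have hKpM : Kp ≤ M := le_trans
    (Real.rpow_le_rpow hKp0.le (by linarith) (by norm_num)) hMK
  have hKmM : Km ≤ M := le_trans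
    (Real.rpow_le_rpow hKm0.le (by linarith) (by norm_num)) hMK
  have hKp3 : Kp^(3:ℕ) = K1 + 2*δ := by
    rw [← Real.rpow_natCast Kp 3, hKpdef, ← Real.rpow_mul hKp0.le]
    norm_num
  have hKm3 : Km^(3:ℕ) = K1 - 2*δ := by
    rw [← Real.rpow_natCast Km 3, hKmdef, ← Real.rpow_mul hKm0.le]
    norm_num
  have hKp4 : Kp^(4:ℕ) ≤ (2*K1)^((4:ℝ)/3) := by
    rw [← Real.rpow_natCast Kp 4, hKpdef, ← Real.rpow_mul hKp0.le]
    norm_num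
    exact Real.rpow_le_rpow hKp0.le (by linarith) (by norm_num)
  have hKm4 : Km^(4:ℕ) ≤ (2*K1)^((4:ℝ)/3) := by
    rw [← Real.rpow_natCast Km 4, hKmdef, ← Real.rpow_mul hKm0.le]
    norm_num
    exact Real.rpow_le_rpow hKm0.le (by linarith) (by norm_num)
  have hKp6 : Kp^(6:ℕ) ≤ (2*K1)^2 := by
    have : Kp^(6:ℕ) = (K1+2*δ)^(2:ℕ) := by
      rw [← Real.rpow_natCast Kp 6, hKpdef, ← Real.rpow_mul hKp0.le,
        ← Real.rpow_natCast (K1+2*δ) 2]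
      norm_num
    rw [this]
    exact pow_le_pow_left₀ hKp0.le (by linarith) 2
  have hKm6 : Km^(6:ℕ) ≤ (2*K1)^2 := by
    have : Km^(6:ℕ) = (K1-2*δ)^(2:ℕ) := by
      rw [← Real.rpow_natCast Km 6, hKmdef, ← Real.rpow_mul hKm0.le,
        ← Real.rpow_natCast (K1-2*δ) 2]
      norm_num
    rw [this]
    exact pow_le_pow_left₀ hKm0.le (by linarith) 2

  -- main error estimate at a point s ≥ M
  have hmain : ∀ s:ℝ, M ≤ s → 0 < s ∧ C₃*s^((-3):ℝ) + C₄*s^((-5):ℝ) < c*s^(-p) := by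
    intro s hs
    have hs0 : 0 < s := lt_of_lt_of_le hMpos hs
    refine ⟨hs0, ?_⟩
    have hsp : 0 < s^(-p) := Real.rpow_pos_of_pos hs0 _
    have e3 : s^(p-3) * s^(-p) = s^((-3):ℝ) := by
      rw [← Real.rpow_add hs0, show p-3 + -p = (-3:ℝ) by ring]
    have e5 : s^(p-5) * s^(-p) = s^((-5):ℝ) := by
      rw [← Real.rpow_add hs0, show p-5 + -p = (-5:ℝ) by ring]
    calc C₃*s^((-3):ℝ) + C₄*s^((-5):ℝ)
        = (C₃*s^(p-3) + C₄*s^(p-5))*s^(-p) := by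
          rw [← e3, ← e5]; ring
      _ < c*s^(-p) := mul_lt_mul_of_pos_right (hZ₀ s (le_trans hMZ₀ hs)) hsp
  obtain ⟨hs₁0, hErr₁⟩ := hmain (Zδ/2) hz₁M
  obtain ⟨hs₂0, hErr₂⟩ := hmain Zδ hZM
  -- margins
  have hmar₁ : δ * (Zδ/2)^((-2):ℝ) = (1 - c₁) * (Zδ/2)^(-p) := by
    rw [hz₁eq, margin_eq p δ (2/3) hp2 hδ0 (by norm_num), hc₁def]; ring_nf
  have hmar₂ : δ * Zδ^((-2):ℝ) = (1 + c₂) * Zδ^(-p) := by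
    rw [hZeq, margin_eq p δ (4/3) hp2 hδ0 (by norm_num), hc₂def]; ring_nf
  -- positivity of powers
  have hs₁p : 0 < (Zδ/2)^(-p) := Real.rpow_pos_of_pos hs₁0 _
  have hs₂p : 0 < Zδ^(-p) := Real.rpow_pos_of_pos hs₂0 _
  have hs₁3 : 0 < (Zδ/2)^((-3):ℝ) := Real.rpow_pos_of_pos hs₁0 _
  have hs₂3 : 0 < Zδ^((-3):ℝ) := Real.rpow_pos_of_pos hs₂0 _
  have hs₁5 : 0 < (Zδ/2)^((-5):ℝ) := Real.rpow_pos_of_pos hs₁0 _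
  have hs₂5 : 0 < Zδ^((-5):ℝ) := Real.rpow_pos_of_pos hs₂0 _
  -- eta's
  have hη₁pos : 0 < (c*(Zδ/2)^(-p) - (C₃*(Zδ/2)^((-3):ℝ) + C₄*(Zδ/2)^((-5):ℝ)))/2 := by
    linarith
  have hη₂pos : 0 < (c*Zδ^(-p) - (C₃*Zδ^((-3):ℝ) + C₄*Zδ^((-5):ℝ)))/2 := by
    exact half_pos (sub_pos.mpr hErr₂)
  -- WK bounds
  have hWKp₁ := WK_bd W Γ CW hWasym Kp (Zδ/2) hKppos (le_trans hKpM hz₁M)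
  have hWKm₁ := WK_bd W Γ CW hWasym Km (Zδ/2) hKmpos (le_trans hKmM hz₁M)
  have hWKp₂ := WK_bd W Γ CW hWasym Kp Zδ hKppos (le_trans hKpM hZM)
  have hWKm₂ := WK_bd W Γ CW hWasym Km Zδ hKmpos (le_trans hKmM hZM)
  rw [rz2, rz3, rz5] at hWKp₁ hWKm₁ hWKp₂ hWKm₂
  obtain ⟨hWKp₁a, hWKp₁b⟩ := abs_le.mp hWKp₁
  obtain ⟨hWKm₁a, hWKm₁b⟩ := abs_le.mp hWKm₁
  obtain ⟨hWKp₂a, hWKp₂b⟩ := abs_le.mp hWKp₂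
  obtain ⟨hWKm₂a, hWKm₂b⟩ := abs_le.mp hWKm₂
  -- bounds on the Γ and CW terms
  have hΓbd : ∀ s:ℝ, 0 < s^((-3):ℝ) → ∀ K:ℝ, 0 < K → K^(4:ℕ) ≤ (2*K1)^((4:ℝ)/3) →
      |Γ * K^4 * s^((-3):ℝ)| ≤ C₃ * s^((-3):ℝ) := by
    intro s hs3 K hK hK4
    rw [abs_mul, abs_mul, abs_of_pos hs3, abs_of_nonneg (pow_nonneg hK.le 4), hC₃def]
    exact mul_le_mul_of_nonneg_right
      (mul_le_mul_of_nonneg_left hK4 (abs_nonneg Γ)) hs3.le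
  obtain ⟨hΓp₁a, hΓp₁b⟩ := abs_le.mp (hΓbd _ hs₁3 _ hKppos hKp4)
  obtain ⟨hΓm₁a, hΓm₁b⟩ := abs_le.mp (hΓbd _ hs₁3 _ hKmpos hKm4)
  obtain ⟨hΓp₂a, hΓp₂b⟩ := abs_le.mp (hΓbd _ hs₂3 _ hKppos hKp4)
  obtain ⟨hΓm₂a, hΓm₂b⟩ := abs_le.mp (hΓbd _ hs₂3 _ hKmpos hKm4)
  have hCWp₁ : CW*Kp^6*(Zδ/2)^((-5):ℝ) ≤ CW*(2*K1)^2*(Zδ/2)^((-5):ℝ) :=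
    mul_le_mul_of_nonneg_right (mul_le_mul_of_nonneg_left hKp6 hCW.le) hs₁5.le
  have hCWm₁ : CW*Km^6*(Zδ/2)^((-5):ℝ) ≤ CW*(2*K1)^2*(Zδ/2)^((-5):ℝ) :=
    mul_le_mul_of_nonneg_right (mul_le_mul_of_nonneg_left hKm6 hCW.le) hs₁5.le
  have hCWp₂ : CW*Kp^6*Zδ^((-5):ℝ) ≤ CW*(2*K1)^2*Zδ^((-5):ℝ) :=
    mul_le_mul_of_nonneg_right (mul_le_mul_of_nonneg_left hKp6 hCW.le) hs₂5.le
  have hCWm₂ : CW*Km^6*Zδ^((-5):ℝ) ≤ CW*(2*K1)^2*Zδ^((-5):ℝ) :=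
    mul_le_mul_of_nonneg_right (mul_le_mul_of_nonneg_left hKm6 hCW.le) hs₂5.le
  -- cube identities as linear facts
  have hKp3₁ : Kp^3*(Zδ/2)^((-2):ℝ) = K1*(Zδ/2)^((-2):ℝ) + 2*(δ*(Zδ/2)^((-2):ℝ)) := by
    rw [hKp3]; ring
  have hKm3₁ : Km^3*(Zδ/2)^((-2):ℝ) = K1*(Zδ/2)^((-2):ℝ) - 2*(δ*(Zδ/2)^((-2):ℝ)) := by
    rw [hKm3]; ring
  have hKp3₂ : Kp^3*Zδ^((-2):ℝ) = K1*Zδ^((-2):ℝ) + 2*(δ*Zδ^((-2):ℝ)) := by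
    rw [hKp3]; ring
  have hKm3₂ : Km^3*Zδ^((-2):ℝ) = K1*Zδ^((-2):ℝ) - 2*(δ*Zδ^((-2):ℝ)) := by
    rw [hKm3]; ring
  -- c ≤ c₁, c ≤ c₂ multiplied
  have hcc₁ : c*(Zδ/2)^(-p) ≤ c₁*(Zδ/2)^(-p) :=
    mul_le_mul_of_nonneg_right (min_le_left _ _) hs₁p.le
  have hcc₂ : c*Zδ^(-p) ≤ c₂*Zδ^(-p) :=
    mul_le_mul_of_nonneg_right (min_le_right _ _) hs₂p.le
  -- C₄ expansion
  have hC₄₁ : C₄*(Zδ/2)^((-5):ℝ) = CW*(2*K1)^2*(Zδ/2)^((-5):ℝ)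
      + 2*(Bstar*K1^2*Cg)*(Zδ/2)^((-5):ℝ) := by rw [hC₄def]; ring
  have hC₄₂ : C₄*Zδ^((-5):ℝ) = CW*(2*K1)^2*Zδ^((-5):ℝ)
      + 2*(Bstar*K1^2*Cg)*Zδ^((-5):ℝ) := by rw [hC₄def]; ring
  -- the eventual statements
  have hev₁p := wmd_ev k K1 γ Bstar p Cg g δ 1 (Zδ/2) hγpos hs₁0 (by norm_num)
    hBstar.le hCg.le hgbd _ hη₁pos
  have hev₁m := wmd_ev k K1 γ Bstar p Cg g δ (-1) (Zδ/2) hγpos hs₁0 (by norm_num)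
    hBstar.le hCg.le hgbd _ hη₁pos
  have hev₂p := wmd_ev k K1 γ Bstar p Cg g δ 1 Zδ hγpos hs₂0 (by norm_num)
    hBstar.le hCg.le hgbd _ hη₂pos
  have hev₂m := wmd_ev k K1 γ Bstar p Cg g δ (-1) Zδ hγpos hs₂0 (by norm_num)
    hBstar.le hCg.le hgbd _ hη₂pos
  have hevD : ∀ᶠ τ in atBot, D * Real.exp (2*γ*τ) < (c*Zδ^(-p) - (C₃*Zδ^((-3):ℝ) + C₄*Zδ^((-5):ℝ)))/2 := by
    have h0 : Tendsto (fun τ => Real.exp (2*γ*τ)) atBot (nhds 0) := by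
      have := exp_tendsto_zero (by linarith : (0:ℝ) < 2*γ)
      simpa [mul_assoc] using this
    have h1 : Tendsto (fun τ => D * Real.exp (2*γ*τ)) atBot (nhds 0) := by
      simpa using h0.const_mul D
    exact h1.eventually_lt_const hη₂pos
  have hall := hev₁p.and (hev₁m.and (hev₂p.and (hev₂m.and hevD)))
  rw [eventually_atBot] at hall
  obtain ⟨τδ, hτδ⟩ := hall
  refine ⟨τδ, fun τ hτ => ?_⟩
  obtain ⟨h1, h2, h3, h4, h5⟩ := hτδ τ hτ
  rw [rz2, rz5] at h1 h2 h3 h4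
  obtain ⟨h1a, h1b⟩ := abs_le.mp h1
  obtain ⟨h2a, h2b⟩ := abs_le.mp h2
  obtain ⟨h3a, h3b⟩ := abs_le.mp h3
  obtain ⟨h4a, h4b⟩ := abs_le.mp h4
  have hDexp : 0 < D * Real.exp (2*γ*τ) := by positivity
  refine ⟨?_, ?_, ?_, ?_⟩
  · -- wmd+ > WK+ at Zδ/2
    linarith [h1a, hWKp₁b, hΓp₁b, hCWp₁, hKp3₁, hcc₁, hmar₁, hErr₁, hC₄₁]
  · -- wmd- < WK- + D exp at Zδ/2
    linarith [h2b, hWKm₁a, hΓm₁a, hCWm₁, hKm3₁, hcc₁, hmar₁, hErr₁, hC₄₁, hDexp]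
  · -- wmd+ < WK+ at Zδ
    linarith [h3b, hWKp₂a, hΓp₂a, hCWp₂, hKp3₂, hcc₂, hmar₂, hErr₂, hC₄₂]
  · -- wmd- > WK- + D exp at Zδ
    linarith [h4a, hWKm₂b, hΓm₂b, hCWm₂, hKm3₂, hcc₂, hmar₂, hErr₂, hC₄₂, h5]
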